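/- Consider the forced Lur'e system ẋ(t) = Ax(t) + B₁f(C₁x(t)) + B₂w(t) under (A1) and (A2) with time-independent f, and assume hypothesis (H1) holds. Let 1 ≤ s < ∞. If (w_a, x_a) and (w_b, x_b) are trajectories of the system such that w_a − w_b ∈ L^s(ℝ₊, ℝ^{m₂}), then x_a(t) − x_b(t) → 0 as t → ∞. -/

import Mathlib

open Matrix MeasureTheory Filter Topology

noncomputable section

/-- A square real matrix is Metzler if all its off-diagonal entries are nonnegative. -/
def IsMetzler {n : ℕ} (A : Matrix (Fin n) (Fin n) ℝ) : Prop :=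
  ∀ i j, i ≠ j → 0 ≤ A i j

/-- A pair `(w, x)` is a trajectory of the forced Lur'e system
`ẋ = Ax + B₁ f(C₁ x) + B₂ w` (time-independent nonlinearity) on `ℝ₊`. -/
def IsTrajectory {n m₁ m₂ p₁ : ℕ}
    (A : Matrix (Fin n) (Fin n) ℝ) (B₁ : Matrix (Fin n) (Fin m₁) ℝ)
    (B₂ : Matrix (Fin n) (Fin m₂) ℝ) (C₁ : Matrix (Fin p₁) (Fin n) ℝ)
    (f : (Fin p₁ → ℝ) → Fin m₁ → ℝ)
    (w : ℝ → Fin m₂ → ℝ) (x : ℝ → Fin n → ℝ) : Prop :=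
  ContinuousOn x (Set.Ici 0) ∧
  ∀ t : ℝ, 0 ≤ t →
    x t = x 0 + ∫ s in (0:ℝ)..t,
      (A.mulVec (x s) + B₁.mulVec (f (C₁.mulVec (x s))) + B₂.mulVec (w s))

/-- mulVec is continuous. -/
lemma lure_cont_mulVec {k l : ℕ} (M : Matrix (Fin k) (Fin l) ℝ) :
    Continuous fun v : Fin l → ℝ => M.mulVec v := by
  have h := (Matrix.mulVecLin M).continuous_of_finiteDimensional
  have : (fun v : Fin l → ℝ => M.mulVec v) = ⇑(Matrix.mulVecLin M) := by
    funext v; simp [Matrix.mulVecLin_apply]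
  rw [this]; exact h

/-- scalar absolute-value slope estimate. -/
lemma lure_abs_slope (a g c J h η : ℝ) (hh : 0 < h) (hη : 0 ≤ η)
    (hsmall : a ≠ 0 → h * (|g| + η) < |a|) (hJ : |J - h * g| ≤ h * η) :
    |a + J| ≤ |a| + h * (c * |a| + |g - c * a| + η) := by
  have hJg : |J| ≤ h * |g| + h * η := by
    calc |J| = |(J - h * g) + h * g| := by ring_nf
    _ ≤ |J - h * g| + |h * g| := abs_add_le _ _
    _ ≤ h * η + h * |g| := by
        rw [abs_mul, abs_of_pos hh]; linarith
    _ = h * |g| + h * η := by ring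
  have hJ1 : J ≤ h * g + h * η := by
    have := (abs_le.mp hJ).2; linarith
  have hJ2 : h * g - h * η ≤ J := by
    have := (abs_le.mp hJ).1; linarith
  have hg1 : g - c * a ≤ |g - c * a| := le_abs_self _
  have hg2 : -(g - c * a) ≤ |g - c * a| := neg_le_abs _
  rcases lt_trichotomy a 0 with hlt | heq | hgt
  · have hs := hsmall (ne_of_lt hlt)
    have ha : |a| = -a := abs_of_neg hlt
    have hgle : g ≤ |g| := le_abs_self g
    have hgle' : -g ≤ |g| := neg_le_abs g
    have haJ : a + J < 0 := by nlinarith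
    rw [abs_of_neg haJ, ha]
    nlinarith [mul_le_mul_of_nonneg_left hg2 hh.le]
  · subst heq
    have hb : |J| ≤ h * (|g| + η) := by nlinarith
    simpa using hb
  · have hs := hsmall (ne_of_gt hgt)
    have ha : |a| = a := abs_of_pos hgt
    have hgle : g ≤ |g| := le_abs_self g
    have hgle' : -g ≤ |g| := neg_le_abs g
    have haJ : 0 < a + J := by nlinarith
    rw [abs_of_pos haJ, ha]
    nlinarith [mul_le_mul_of_nonneg_left hg1 hh.le]

/-- pointwise Young-type bound. -/
lemma lure_theta_bound (x θ s : ℝ) (hx : 0 ≤ x) (hθ : 0 < θ) (hθ1 : θ ≤ 1) (hs : 1 ≤ s) :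
    x ≤ θ + θ ^ (1 - s) * x ^ s := by
  rcases le_or_gt x θ with hle | hgt
  · have h1 : 0 ≤ θ ^ (1 - s) := Real.rpow_nonneg hθ.le _
    have h2 : 0 ≤ x ^ s := Real.rpow_nonneg hx _
    nlinarith
  · have hx0 : 0 < x := lt_trans hθ hgt
    have hxeq : x = x ^ s * x ^ (1 - s) := by
      rw [← Real.rpow_add hx0]; norm_num
    have h1 : x ^ (1 - s) ≤ θ ^ (1 - s) :=
      Real.rpow_le_rpow_of_nonpos hθ hgt.le (by linarith)
    have h2 : 0 ≤ x ^ s := Real.rpow_nonneg hx _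
    calc x = x ^ s * x ^ (1 - s) := hxeq
    _ ≤ x ^ s * θ ^ (1 - s) := by nlinarith
    _ = θ ^ (1 - s) * x ^ s := by ring
    _ ≤ θ + θ ^ (1 - s) * x ^ s := by
        have : 0 ≤ θ ^ (1 - s) * x ^ s - θ ^ (1 - s) * x ^ s := by ring_nf; exact le_rfl
        linarith [hθ.le]

/-- monotonicity of mulVec with nonnegative entries. -/
lemma lure_mulVec_mono {k l : ℕ} (M : Matrix (Fin k) (Fin l) ℝ)
    (hM : ∀ i j, 0 ≤ M i j) (u v : Fin l → ℝ) (huv : ∀ j, u j ≤ v j) (i : Fin k) :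
    (M.mulVec u) i ≤ (M.mulVec v) i := by
  simp only [Matrix.mulVec, dotProduct]
  exact Finset.sum_le_sum fun j _ => mul_le_mul_of_nonneg_left (huv j) (hM i j)

/-- componentwise abs bound for mulVec with nonnegative entries. -/
lemma lure_abs_mulVec {k l : ℕ} (M : Matrix (Fin k) (Fin l) ℝ)
    (hM : ∀ i j, 0 ≤ M i j) (v : Fin l → ℝ) (i : Fin k) :
    |(M.mulVec v) i| ≤ (M.mulVec (fun j => |v j|)) i := by
  simp only [Matrix.mulVec, dotProduct]
  calc |∑ j, M i j * v j| ≤ ∑ j, |M i j * v j| := Finset.abs_sum_le_sum_abs _ _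
  _ = ∑ j, M i j * |v j| := by
      refine Finset.sum_congr rfl fun j _ => ?_
      rw [abs_mul, abs_of_nonneg (hM i j)]

/-- weighted-sum / vecMul exchange. -/
lemma lure_dot {k l : ℕ} (p : Fin k → ℝ) (M : Matrix (Fin k) (Fin l) ℝ) (v : Fin l → ℝ) :
    ∑ i, p i * (M.mulVec v) i = ∑ j, (Matrix.vecMul p M) j * v j := by
  simp only [Matrix.mulVec, Matrix.vecMul, dotProduct, Finset.mul_sum,
    Finset.sum_mul]
  rw [Finset.sum_comm]
  refine Finset.sum_congr rfl fun j _ => Finset.sum_congr rfl fun i _ => by ring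

set_option maxHeartbeats 2000000 in
theorem stmt12 {n m₁ m₂ p₁ : ℕ}
    (A : Matrix (Fin n) (Fin n) ℝ) (B₁ : Matrix (Fin n) (Fin m₁) ℝ)
    (B₂ : Matrix (Fin n) (Fin m₂) ℝ) (C₁ : Matrix (Fin p₁) (Fin n) ℝ)
    -- (A1)
    (hA : IsMetzler A) (hB₁ : ∀ i j, 0 ≤ B₁ i j) (hB₂ : ∀ i j, 0 ≤ B₂ i j)
    (hC₁ : ∀ i j, 0 ≤ C₁ i j)
    -- (A2), time-independent
    (f : (Fin p₁ → ℝ) → Fin m₁ → ℝ) (Δ : Matrix (Fin m₁) (Fin p₁) ℝ)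
    (hΔ : ∀ i j, 0 ≤ Δ i j)
    (hf_inc : ∀ ζ₁ ζ₂ : Fin p₁ → ℝ,
        ∀ i, |f ζ₁ i - f ζ₂ i| ≤ Δ.mulVec (fun j => |ζ₁ j - ζ₂ j|) i)
    -- (H1)
    (ξ : ℝ) (hξ : 0 < ξ) (p : Fin n → ℝ) (hp : ∀ i, 0 < p i)
    (hH1 : ∀ j, vecMul p (A + B₁ * Δ * C₁) j ≤ -(ξ * p j))
    -- two trajectories
    (w_a w_b : ℝ → Fin m₂ → ℝ) (x_a x_b : ℝ → Fin n → ℝ)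
    (hwa : LocallyIntegrableOn w_a (Set.Ici 0) volume)
    (hwb : LocallyIntegrableOn w_b (Set.Ici 0) volume)
    (ha : IsTrajectory A B₁ B₂ C₁ f w_a x_a)
    (hb : IsTrajectory A B₁ B₂ C₁ f w_b x_b)
    -- w_a − w_b ∈ L^s(ℝ₊, ℝ^{m₂})
    (s : ℝ) (hs : 1 ≤ s)
    (hmeas : AEStronglyMeasurable (fun t => w_a t - w_b t) (volume.restrict (Set.Ici 0)))
    (hLs : IntegrableOn (fun t => ‖w_a t - w_b t‖ ^ s) (Set.Ici 0) volume) :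
    Tendsto (fun t => x_a t - x_b t) atTop (𝓝 0) := by
  classical
  obtain ⟨hxa_cont, hxa_eq⟩ := ha
  obtain ⟨hxb_cont, hxb_eq⟩ := hb
  set δw : ℝ → Fin m₂ → ℝ := fun t => w_a t - w_b t with hδw_def
  set z : ℝ → Fin n → ℝ := fun t => x_a t - x_b t with hz_def
  set δf : ℝ → Fin m₁ → ℝ :=
    fun t => f (C₁.mulVec (x_a t)) - f (C₁.mulVec (x_b t)) with hδf_def
  set G : ℝ → Fin n → ℝ := fun t => A.mulVec (z t) + B₁.mulVec (δf t) with hG_def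
  set bw : ℝ → Fin n → ℝ := fun t => B₂.mulVec (δw t) with hbw_def
  set V : ℝ → ℝ := fun t => ∑ i, p i * |z t i| with hV_def
  set Kc : Fin n → ℝ := fun j => ∑ i, p i * ((B₁ * Δ * C₁) i j + |A i j|) with hKc_def
  set q : ℝ → ℝ := fun σ => ∑ j, (Kc j + p j) * |bw σ j| with hq_def
  set Q : ℝ → ℝ → ℝ := fun r t => ∫ σ in r..t, q σ with hQ_def
  -- entrywise nonnegativity of B₁ * Δ * C₁
  have hBDC : ∀ i j, 0 ≤ (B₁ * Δ * C₁) i j := by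
    intro i j
    rw [Matrix.mul_apply]
    refine Finset.sum_nonneg fun l _ => mul_nonneg ?_ (hC₁ l j)
    rw [Matrix.mul_apply]
    exact Finset.sum_nonneg fun k _ => mul_nonneg (hB₁ i k) (hΔ k l)
  have hKc_nn : ∀ j, 0 ≤ Kc j := fun j => Finset.sum_nonneg fun i _ =>
    mul_nonneg (hp i).le (add_nonneg (hBDC i j) (abs_nonneg _))
  -- continuity of f
  have hfc : Continuous f := by
    rw [continuous_iff_continuousAt]
    intro ζ₀
    rw [ContinuousAt, tendsto_pi_nhds]
    intro i
    rw [tendsto_iff_dist_tendsto_zero]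
    refine squeeze_zero (g := fun ζ => ∑ j, Δ i j * |ζ j - ζ₀ j|)
      (fun ζ => dist_nonneg) ?_ ?_
    · intro ζ
      have h := hf_inc ζ ζ₀ i
      simpa [Real.dist_eq, Matrix.mulVec, dotProduct] using h
    · have hc : Continuous fun ζ : Fin p₁ → ℝ => ∑ j, Δ i j * |ζ j - ζ₀ j| := by
        apply continuous_finset_sum
        intro j _
        exact continuous_const.mul ((continuous_apply j).sub continuous_const).abs
      have := hc.tendsto ζ₀
      simpa using this
  -- continuity facts
  have hzc : ContinuousOn z (Set.Ici 0) := hxa_cont.sub hxb_cont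
  have hGc : ContinuousOn G (Set.Ici 0) := by
    apply ContinuousOn.add
    · exact (lure_cont_mulVec A).comp_continuousOn hzc
    · apply (lure_cont_mulVec B₁).comp_continuousOn
      exact ((hfc.comp (lure_cont_mulVec C₁)).comp_continuousOn hxa_cont).sub
        ((hfc.comp (lure_cont_mulVec C₁)).comp_continuousOn hxb_cont)
  -- integrability of B₂ ∘ w on intervals in ℝ₊
  have hw_int : ∀ (w : ℝ → Fin m₂ → ℝ), LocallyIntegrableOn w (Set.Ici 0) volume →
      ∀ a b : ℝ, 0 ≤ a → a ≤ b →
      IntervalIntegrable (fun σ => B₂.mulVec (w σ)) volume a b := by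
    intro w hw a b ha0 hab
    have hsub : Set.Icc a b ⊆ Set.Ici 0 := fun u hu => le_trans ha0 hu.1
    have h1 : IntegrableOn w (Set.Icc a b) volume :=
      hw.integrableOn_compact_subset hsub isCompact_Icc
    have h2 := (LinearMap.toContinuousLinearMap (Matrix.mulVecLin B₂)).integrable_comp h1
    have h3 : IntegrableOn (fun σ => B₂.mulVec (w σ)) (Set.Icc a b) volume := by
      simp [LinearMap.coe_toContinuousLinearMap', Matrix.mulVecLin_apply] at h2; exact h2
    exact ((Set.uIcc_of_le hab).symm ▸ h3).intervalIntegrable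
  have hδw_loc : LocallyIntegrableOn δw (Set.Ici 0) volume := hwa.sub hwb
  have hbw_int : ∀ a b : ℝ, 0 ≤ a → a ≤ b → IntervalIntegrable bw volume a b :=
    fun a b ha0 hab => hw_int δw hδw_loc a b ha0 hab
  -- integrability of q on intervals in ℝ₊
  have hq_nonneg : ∀ σ, 0 ≤ q σ := by
    intro σ
    exact Finset.sum_nonneg fun j _ =>
      mul_nonneg (add_nonneg (hKc_nn j) (hp j).le) (abs_nonneg _)
  have hbwj_int : ∀ (j : Fin n) (a b : ℝ), 0 ≤ a → a ≤ b →
      IntegrableOn (fun σ => |bw σ j|) (Set.Icc a b) volume := by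
    intro j a b ha0 hab
    have hsub : Set.Icc a b ⊆ Set.Ici 0 := fun u hu => le_trans ha0 hu.1
    have h1 : IntegrableOn δw (Set.Icc a b) volume :=
      hδw_loc.integrableOn_compact_subset hsub isCompact_Icc
    have h2 := ((ContinuousLinearMap.proj (R := ℝ) (φ := fun _ : Fin n => ℝ) j).comp
      (LinearMap.toContinuousLinearMap (Matrix.mulVecLin B₂))).integrable_comp h1
    have h3 : IntegrableOn (fun σ => bw σ j) (Set.Icc a b) volume := by
      simp [LinearMap.coe_toContinuousLinearMap', Matrix.mulVecLin_apply] at h2; exact h2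
    exact h3.abs
  have hq_int : ∀ a b : ℝ, 0 ≤ a → a ≤ b → IntervalIntegrable q volume a b := by
    intro a b ha0 hab
    have h4 : IntegrableOn q (Set.Icc a b) volume := by
      have := integrable_finset_sum (μ := volume.restrict (Set.Icc a b))
        (s := Finset.univ)
        (f := fun (j : Fin n) (σ : ℝ) => (Kc j + p j) * |bw σ j|)
        (fun j _ => ((hbwj_int j a b ha0 hab).const_mul _))
      exact this
    exact ((Set.uIcc_of_le hab).symm ▸ h4).intervalIntegrable
  have hbwj_ii : ∀ (j : Fin n) (a b : ℝ), 0 ≤ a → a ≤ b →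
      IntervalIntegrable (fun σ => |bw σ j|) volume a b := fun j a b ha0 hab =>
    ((Set.uIcc_of_le hab).symm ▸ hbwj_int j a b ha0 hab).intervalIntegrable
  have hbw_icc : ∀ a b : ℝ, 0 ≤ a → a ≤ b → IntegrableOn bw (Set.Icc a b) volume := by
    intro a b ha0 hab
    have hsub : Set.Icc a b ⊆ Set.Ici 0 := fun u hu => le_trans ha0 hu.1
    have h1 : IntegrableOn δw (Set.Icc a b) volume :=
      hδw_loc.integrableOn_compact_subset hsub isCompact_Icc
    have h2 := (LinearMap.toContinuousLinearMap (Matrix.mulVecLin B₂)).integrable_comp h1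
    simp [LinearMap.coe_toContinuousLinearMap', Matrix.mulVecLin_apply] at h2; exact h2
  have hG_ii : ∀ a b : ℝ, 0 ≤ a → a ≤ b → IntervalIntegrable G volume a b := by
    intro a b ha0 hab
    apply ContinuousOn.intervalIntegrable
    rw [Set.uIcc_of_le hab]
    exact hGc.mono fun u hu => le_trans ha0 hu.1
  -- integrability of trajectory integrands
  have hcint : ∀ (x : ℝ → Fin n → ℝ), ContinuousOn x (Set.Ici 0) → ∀ a b : ℝ,
      0 ≤ a → a ≤ b →
      IntervalIntegrable (fun σ => A.mulVec (x σ) + B₁.mulVec (f (C₁.mulVec (x σ))))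
        volume a b := by
    intro x hx a b ha0 hab
    apply ContinuousOn.intervalIntegrable
    rw [Set.uIcc_of_le hab]
    have hsub : Set.Icc a b ⊆ Set.Ici 0 := fun u hu => le_trans ha0 hu.1
    exact ((lure_cont_mulVec A).comp_continuousOn (hx.mono hsub)).add
      ((lure_cont_mulVec B₁).comp_continuousOn
        ((hfc.comp (lure_cont_mulVec C₁)).comp_continuousOn (hx.mono hsub)))
  have hΦ_int : ∀ (w : ℝ → Fin m₂ → ℝ) (x : ℝ → Fin n → ℝ),
      LocallyIntegrableOn w (Set.Ici 0) volume → ContinuousOn x (Set.Ici 0) →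
      ∀ a b : ℝ, 0 ≤ a → a ≤ b →
      IntervalIntegrable
        (fun σ => A.mulVec (x σ) + B₁.mulVec (f (C₁.mulVec (x σ))) + B₂.mulVec (w σ))
        volume a b :=
    fun w x hw hx a b ha0 hab =>
      (hcint x hx a b ha0 hab).add (hw_int w hw a b ha0 hab)
  -- the integral identity for z
  have hzeq : ∀ a b : ℝ, 0 ≤ a → a ≤ b →
      z b = z a + ∫ σ in a..b, (G σ + bw σ) := by
    intro a b ha0 hab
    have hb0 : 0 ≤ b := le_trans ha0 hab
    have hIa1 := hΦ_int w_a x_a hwa hxa_cont 0 a le_rfl ha0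
    have hIa2 := hΦ_int w_a x_a hwa hxa_cont a b ha0 hab
    have hIb1 := hΦ_int w_b x_b hwb hxb_cont 0 a le_rfl ha0
    have hIb2 := hΦ_int w_b x_b hwb hxb_cont a b ha0 hab
    have hxa_d : x_a b = x_a a + ∫ σ in a..b,
        (A.mulVec (x_a σ) + B₁.mulVec (f (C₁.mulVec (x_a σ))) + B₂.mulVec (w_a σ)) := by
      rw [hxa_eq b hb0, hxa_eq a ha0,
        ← intervalIntegral.integral_add_adjacent_intervals hIa1 hIa2, add_assoc]
    have hxb_d : x_b b = x_b a + ∫ σ in a..b,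
        (A.mulVec (x_b σ) + B₁.mulVec (f (C₁.mulVec (x_b σ))) + B₂.mulVec (w_b σ)) := by
      rw [hxb_eq b hb0, hxb_eq a ha0,
        ← intervalIntegral.integral_add_adjacent_intervals hIb1 hIb2, add_assoc]
    have hptw : ∀ σ : ℝ,
        (A.mulVec (x_a σ) + B₁.mulVec (f (C₁.mulVec (x_a σ))) + B₂.mulVec (w_a σ)) -
        (A.mulVec (x_b σ) + B₁.mulVec (f (C₁.mulVec (x_b σ))) + B₂.mulVec (w_b σ)) =
        G σ + bw σ := by
      intro σ
      simp only [hG_def, hbw_def, hδf_def, hδw_def, hz_def]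
      rw [Matrix.mulVec_sub, Matrix.mulVec_sub, Matrix.mulVec_sub]
      abel
    calc z b = x_a b - x_b b := rfl
    _ = (x_a a + ∫ σ in a..b,
          (A.mulVec (x_a σ) + B₁.mulVec (f (C₁.mulVec (x_a σ))) + B₂.mulVec (w_a σ))) -
        (x_b a + ∫ σ in a..b,
          (A.mulVec (x_b σ) + B₁.mulVec (f (C₁.mulVec (x_b σ))) + B₂.mulVec (w_b σ))) := by
      rw [hxa_d, hxb_d]
    _ = z a + ((∫ σ in a..b,
          (A.mulVec (x_a σ) + B₁.mulVec (f (C₁.mulVec (x_a σ))) + B₂.mulVec (w_a σ))) -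
        (∫ σ in a..b,
          (A.mulVec (x_b σ) + B₁.mulVec (f (C₁.mulVec (x_b σ))) + B₂.mulVec (w_b σ)))) := by
        simp only [hz_def]; abel
    _ = z a + ∫ σ in a..b,
          ((A.mulVec (x_a σ) + B₁.mulVec (f (C₁.mulVec (x_a σ))) + B₂.mulVec (w_a σ)) -
           (A.mulVec (x_b σ) + B₁.mulVec (f (C₁.mulVec (x_b σ))) + B₂.mulVec (w_b σ))) := by
        rw [intervalIntegral.integral_sub hIa2 hIb2]
    _ = z a + ∫ σ in a..b, (G σ + bw σ) := by
        congr 1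
        apply intervalIntegral.integral_congr
        intro σ _
        exact hptw σ
  -- nonnegativity of V
  have hVnn : ∀ t, 0 ≤ V t := fun t =>
    Finset.sum_nonneg fun i _ => mul_nonneg (hp i).le (abs_nonneg _)
  -- nonnegativity and monotonicity of Q
  have hQnn : ∀ r t : ℝ, 0 ≤ r → r ≤ t → 0 ≤ Q r t := by
    intro r t hr hrt
    exact intervalIntegral.integral_nonneg hrt fun σ _ => hq_nonneg σ
  have hQmono : ∀ r t t' : ℝ, 0 ≤ r → r ≤ t → t ≤ t' → Q r t ≤ Q r t' := by
    intro r t t' hr hrt htt'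
    exact intervalIntegral.integral_mono_interval le_rfl hrt htt'
      (ae_of_all _ fun σ => hq_nonneg σ) (hq_int r t' hr (hrt.trans htt'))
  -- THE KEY INEQUALITY
  have KEY : ∀ r t : ℝ, 0 ≤ r → r ≤ t →
      V t ≤ V r * Real.exp (-ξ * (t - r)) + (1 / ξ + 1) * Q r t := by
    intro r t hr hrt
    set W : ℝ → Fin n → ℝ := fun τ => ∫ σ in r..τ, bw σ with hW_def
    set zh : ℝ → Fin n → ℝ := fun τ => z τ - W τ with hzh_def
    set Vh : ℝ → ℝ := fun τ => ∑ i, p i * |zh τ i| with hVh_def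
    set Ij : Fin n → ℝ := fun j => ∫ σ in r..t, |bw σ j| with hIj_def
    set D : ℝ → ℝ := fun τ => ∑ i, p i * (A i i * |zh τ i| + |G τ i - A i i * zh τ i|)
      with hD_def
    have hIj_nn : ∀ j, 0 ≤ Ij j := fun j =>
      intervalIntegral.integral_nonneg hrt fun σ _ => abs_nonneg _
    have hQval : Q r t = ∑ j, (Kc j + p j) * Ij j := by
      have h1 : Q r t = ∑ j, ∫ σ in r..t, (Kc j + p j) * |bw σ j| := by
        show (∫ σ in r..t, q σ) = _
        rw [hq_def]
        exact intervalIntegral.integral_finset_sum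
          fun j _ => (hbwj_ii j r t hr hrt).const_mul _
      rw [h1]
      exact Finset.sum_congr rfl fun j _ => by
        rw [intervalIntegral.integral_const_mul]
    have hWj : ∀ τ : ℝ, r ≤ τ → ∀ j, W τ j = ∫ σ in r..τ, bw σ j := by
      intro τ hτ j
      have h := (ContinuousLinearMap.proj (R := ℝ) (φ := fun _ : Fin n => ℝ)
        j).intervalIntegral_comp_comm (hbw_int r τ hr hτ)
      simpa [ContinuousLinearMap.proj_apply] using h.symm
    have hGj : ∀ a b : ℝ, 0 ≤ a → a ≤ b → ∀ j,
        (∫ σ in a..b, G σ) j = ∫ σ in a..b, G σ j := by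
      intro a b ha0 hab j
      have h := (ContinuousLinearMap.proj (R := ℝ) (φ := fun _ : Fin n => ℝ)
        j).intervalIntegral_comp_comm (hG_ii a b ha0 hab)
      simpa [ContinuousLinearMap.proj_apply] using h.symm
    have hWbound : ∀ τ, τ ∈ Set.Icc r t → ∀ j, |W τ j| ≤ Ij j := by
      intro τ hτ j
      rw [hWj τ hτ.1 j]
      calc |∫ σ in r..τ, bw σ j| ≤ ∫ σ in r..τ, |bw σ j| :=
            intervalIntegral.abs_integral_le_integral_abs hτ.1
      _ ≤ Ij j := intervalIntegral.integral_mono_interval le_rfl hτ.1 hτ.2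
            (ae_of_all _ fun σ => abs_nonneg _) (hbwj_ii j r t hr hrt)
    have hzh_eq : ∀ τ : ℝ, r ≤ τ → zh τ = z r + ∫ σ in r..τ, G σ := by
      intro τ hτ
      have h1 := hzeq r τ hr hτ
      have h2 : (∫ σ in r..τ, (G σ + bw σ)) =
          (∫ σ in r..τ, G σ) + ∫ σ in r..τ, bw σ :=
        intervalIntegral.integral_add (hG_ii r τ hr hτ) (hbw_int r τ hr hτ)
      show z τ - (∫ σ in r..τ, bw σ) = _
      rw [h1, h2]
      abel
    have hWc : ContinuousOn W (Set.Icc r t) := by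
      have h := intervalIntegral.continuousOn_primitive_interval
        (a := r) (b := t) (f := bw) (μ := volume)
        ((Set.uIcc_of_le hrt).symm ▸ hbw_icc r t hr hrt)
      rwa [Set.uIcc_of_le hrt] at h
    have hzhc : ContinuousOn zh (Set.Icc r t) :=
      (hzc.mono fun u hu => le_trans hr hu.1).sub hWc
    have hVhc : ContinuousOn Vh (Set.Icc r t) := by
      apply continuousOn_finset_sum
      intro i _
      exact continuousOn_const.mul
        (continuous_abs.comp_continuousOn ((continuous_apply i).comp_continuousOn hzhc))
    have hVhr : Vh r = V r := by
      have hW0 : W r = 0 := intervalIntegral.integral_same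
      show (∑ i, p i * |(z r - W r) i|) = ∑ i, p i * |z r i|
      rw [hW0]
      simp
    -- the differential-inequality bound for D
    have hD_le : ∀ τ, τ ∈ Set.Icc r t → D τ ≤ -ξ * Vh τ + Q r t := by
      intro τ hτ
      set au : Fin n → ℝ := fun j => |zh τ j| with hau_def
      set aw : Fin n → ℝ := fun j => |W τ j| with haw_def
      set absA : Matrix (Fin n) (Fin n) ℝ := Matrix.of fun i j => |A i j| with habsA_def
      have hzuv : ∀ j, z τ j = zh τ j + W τ j := by
        intro j; show z τ j = (z τ - W τ) j + W τ j; simp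
      have hcomp : ∀ i, |G τ i - A i i * zh τ i| ≤
          ((A.mulVec au) i - A i i * au i) + ((B₁*Δ*C₁).mulVec au) i
            + (((B₁*Δ*C₁).mulVec aw) i + (absA.mulVec aw) i) := by
        intro i
        have hzvec : z τ = zh τ + W τ := funext hzuv
        have hsplit : G τ i - A i i * zh τ i =
            ((A.mulVec (zh τ)) i - A i i * zh τ i) + (A.mulVec (W τ)) i
              + (B₁.mulVec (δf τ)) i := by
          show (A.mulVec (z τ) + B₁.mulVec (δf τ)) i - A i i * zh τ i = _
          rw [hzvec, Matrix.mulVec_add]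
          simp only [Pi.add_apply]
          ring
        rw [hsplit]
        have T1 : |(A.mulVec (zh τ)) i - A i i * zh τ i| ≤ (A.mulVec au) i - A i i * au i := by
          have h1 : (A.mulVec (zh τ)) i - A i i * zh τ i
              = ∑ j ∈ Finset.univ.erase i, A i j * zh τ j := by
            simp only [Matrix.mulVec, dotProduct]
            rw [← Finset.sum_erase_add Finset.univ _ (Finset.mem_univ i)]
            ring
          have h2 : (A.mulVec au) i - A i i * au i
              = ∑ j ∈ Finset.univ.erase i, A i j * au j := by
            simp only [Matrix.mulVec, dotProduct]
            rw [← Finset.sum_erase_add Finset.univ _ (Finset.mem_univ i)]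
            ring
          rw [h1, h2]
          calc |∑ j ∈ Finset.univ.erase i, A i j * zh τ j|
              ≤ ∑ j ∈ Finset.univ.erase i, |A i j * zh τ j| :=
              Finset.abs_sum_le_sum_abs _ _
          _ ≤ ∑ j ∈ Finset.univ.erase i, A i j * au j := by
              apply Finset.sum_le_sum
              intro j hj
              rw [abs_mul, abs_of_nonneg (hA i j (Finset.ne_of_mem_erase hj).symm)]
        have T2 : |(A.mulVec (W τ)) i| ≤ (absA.mulVec aw) i := by
          simp only [Matrix.mulVec, dotProduct, habsA_def, Matrix.of_apply]
          calc |∑ j, A i j * W τ j| ≤ ∑ j, |A i j * W τ j| :=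
              Finset.abs_sum_le_sum_abs _ _
          _ = ∑ j, |A i j| * |W τ j| := by simp [abs_mul]
        have T3 : |(B₁.mulVec (δf τ)) i| ≤ ((B₁*Δ*C₁).mulVec (fun j => |z τ j|)) i := by
          have h1 : |(B₁.mulVec (δf τ)) i| ≤ (B₁.mulVec (fun k => |δf τ k|)) i :=
            lure_abs_mulVec B₁ hB₁ _ i
          have h2 : ∀ k, |δf τ k| ≤ (Δ.mulVec (fun l => |(C₁.mulVec (z τ)) l|)) k := by
            intro k
            have h3 := hf_inc (C₁.mulVec (x_a τ)) (C₁.mulVec (x_b τ)) k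
            have h4 : (fun l => |(C₁.mulVec (x_a τ)) l - (C₁.mulVec (x_b τ)) l|)
                = fun l => |(C₁.mulVec (z τ)) l| := by
              funext l
              have : (C₁.mulVec (z τ)) l
                  = (C₁.mulVec (x_a τ)) l - (C₁.mulVec (x_b τ)) l := by
                show (C₁.mulVec (x_a τ - x_b τ)) l = _
                rw [Matrix.mulVec_sub]
                simp
              rw [this]
            rw [h4] at h3
            exact h3
          have h5 : ∀ k, (Δ.mulVec (fun l => |(C₁.mulVec (z τ)) l|)) k
              ≤ (Δ.mulVec (C₁.mulVec (fun j => |z τ j|))) k :=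
            fun k => lure_mulVec_mono Δ hΔ _ _ (fun l => lure_abs_mulVec C₁ hC₁ _ l) k
          calc |(B₁.mulVec (δf τ)) i| ≤ (B₁.mulVec (fun k => |δf τ k|)) i := h1
          _ ≤ (B₁.mulVec (Δ.mulVec (C₁.mulVec (fun j => |z τ j|)))) i :=
              lure_mulVec_mono B₁ hB₁ _ _ (fun k => le_trans (h2 k) (h5 k)) i
          _ = ((B₁*Δ*C₁).mulVec (fun j => |z τ j|)) i := by
              rw [Matrix.mulVec_mulVec, Matrix.mulVec_mulVec]
        have T3' : ((B₁*Δ*C₁).mulVec (fun j => |z τ j|)) i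
            ≤ ((B₁*Δ*C₁).mulVec au) i + ((B₁*Δ*C₁).mulVec aw) i := by
          have hzle : ∀ j, |z τ j| ≤ au j + aw j := by
            intro j
            rw [hzuv j]
            exact abs_add_le _ _
          calc ((B₁*Δ*C₁).mulVec (fun j => |z τ j|)) i
              ≤ ((B₁*Δ*C₁).mulVec (au + aw)) i :=
              lure_mulVec_mono _ hBDC _ _ hzle i
          _ = ((B₁*Δ*C₁).mulVec au) i + ((B₁*Δ*C₁).mulVec aw) i := by
              rw [Matrix.mulVec_add]
              simp
        calc |(A.mulVec (zh τ)) i - A i i * zh τ i + (A.mulVec (W τ)) i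
              + (B₁.mulVec (δf τ)) i|
            ≤ |(A.mulVec (zh τ)) i - A i i * zh τ i + (A.mulVec (W τ)) i|
              + |(B₁.mulVec (δf τ)) i| := abs_add_le _ _
        _ ≤ |(A.mulVec (zh τ)) i - A i i * zh τ i| + |(A.mulVec (W τ)) i|
              + |(B₁.mulVec (δf τ)) i| := by
            have := abs_add_le ((A.mulVec (zh τ)) i - A i i * zh τ i) ((A.mulVec (W τ)) i)
            linarith
        _ ≤ ((A.mulVec au) i - A i i * au i) + (absA.mulVec aw) i
              + (((B₁*Δ*C₁).mulVec au) i + ((B₁*Δ*C₁).mulVec aw) i) := by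
            have := T3.trans T3'
            linarith
        _ = ((A.mulVec au) i - A i i * au i) + ((B₁*Δ*C₁).mulVec au) i
              + (((B₁*Δ*C₁).mulVec aw) i + (absA.mulVec aw) i) := by ring
      have hsum : D τ ≤ (∑ i, p i * (((A + B₁*Δ*C₁).mulVec au) i))
          + ∑ i, p i * ((((B₁*Δ*C₁) + absA).mulVec aw) i) := by
        have step : ∀ i, p i * (A i i * |zh τ i| + |G τ i - A i i * zh τ i|)
            ≤ p i * (((A + B₁*Δ*C₁).mulVec au) i) + p i * ((((B₁*Δ*C₁) + absA).mulVec aw) i) := by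
          intro i
          have h6 := hcomp i
          have h7 : ((A + B₁*Δ*C₁).mulVec au) i = (A.mulVec au) i + ((B₁*Δ*C₁).mulVec au) i := by
            rw [Matrix.add_mulVec]; simp
          have h8 : (((B₁*Δ*C₁) + absA).mulVec aw) i
              = ((B₁*Δ*C₁).mulVec aw) i + (absA.mulVec aw) i := by
            rw [Matrix.add_mulVec]; simp
          have hpnn := (hp i).le
          have hau_i : au i = |zh τ i| := rfl
          nlinarith [mul_le_mul_of_nonneg_left h6 hpnn]
        calc D τ ≤ ∑ i, (p i * (((A + B₁*Δ*C₁).mulVec au) i)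
            + p i * ((((B₁*Δ*C₁) + absA).mulVec aw) i)) := Finset.sum_le_sum fun i _ => step i
        _ = _ := Finset.sum_add_distrib
      have h1 : (∑ i, p i * (((A + B₁*Δ*C₁).mulVec au) i)) ≤ -ξ * Vh τ := by
        rw [lure_dot]
        calc ∑ j, (vecMul p (A + B₁*Δ*C₁)) j * au j ≤ ∑ j, (-(ξ * p j)) * au j :=
            Finset.sum_le_sum fun j _ =>
              mul_le_mul_of_nonneg_right (hH1 j) (abs_nonneg _)
        _ = -ξ * Vh τ := by
            show _ = -ξ * ∑ i, p i * |zh τ i|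
            rw [Finset.mul_sum]
            exact Finset.sum_congr rfl fun j _ => by ring
      have h2 : (∑ i, p i * ((((B₁*Δ*C₁) + absA).mulVec aw) i)) ≤ Q r t := by
        rw [lure_dot]
        have hvm : ∀ j, (vecMul p ((B₁*Δ*C₁) + absA)) j = Kc j := by
          intro j
          show (vecMul p ((B₁*Δ*C₁) + absA)) j = ∑ i, p i * ((B₁ * Δ * C₁) i j + |A i j|)
          simp [Matrix.vecMul, dotProduct, Matrix.add_apply, habsA_def]
        calc ∑ j, (vecMul p ((B₁*Δ*C₁) + absA)) j * aw j = ∑ j, Kc j * aw j :=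
            Finset.sum_congr rfl fun j _ => by rw [hvm j]
        _ ≤ ∑ j, Kc j * Ij j := Finset.sum_le_sum fun j _ =>
            mul_le_mul_of_nonneg_left (hWbound τ hτ j) (hKc_nn j)
        _ ≤ ∑ j, (Kc j + p j) * Ij j := Finset.sum_le_sum fun j _ =>
            mul_le_mul_of_nonneg_right (by linarith [(hp j).le]) (hIj_nn j)
        _ = Q r t := hQval.symm
      linarith
    -- the slope estimate
    have hcore : ∀ τ, τ ∈ Set.Ico r t → ∀ η : ℝ, 0 < η →
        ∀ᶠ τ' in 𝓝[>] τ, Vh τ' - Vh τ ≤ (τ' - τ) * (D τ + η) := by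
      intro τ hτ η hη
      have hτ0 : (0:ℝ) ≤ τ := le_trans hr hτ.1
      set sump := ∑ i, p i with hsump_def
      have hsump_nn : (0:ℝ) ≤ sump := Finset.sum_nonneg fun i _ => (hp i).le
      set η1 := η / (sump + 1) with hη1_def
      have hη1 : 0 < η1 := div_pos hη (by linarith)
      have hGcw : ContinuousWithinAt G (Set.Ici 0) τ := hGc τ hτ0
      rw [Metric.continuousWithinAt_iff] at hGcw
      obtain ⟨d, hd, hball⟩ := hGcw η1 hη1
      have E1 : ∀ᶠ τ' in 𝓝[>] τ, τ' ∈ Set.Ioc τ t :=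
        Ioc_mem_nhdsGT_of_mem ⟨le_refl τ, hτ.2⟩
      have E2 : ∀ᶠ τ' in 𝓝[>] τ, τ' - τ < d := by
        have h := Ioo_mem_nhdsGT_of_mem
          (show τ ∈ Set.Ico τ (τ + d) from ⟨le_refl τ, by linarith⟩)
        filter_upwards [h] with τ' h'
        linarith [h'.2]
      have E3 : ∀ᶠ τ' in 𝓝[>] τ, ∀ i : Fin n,
          zh τ i ≠ 0 → (τ' - τ) * (|G τ i| + η1) < |zh τ i| := by
        rw [Filter.eventually_all]
        intro i
        by_cases hzi : zh τ i = 0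
        · exact Filter.Eventually.of_forall fun τ' h => absurd hzi h
        · have hden : (0:ℝ) < |G τ i| + η1 := by positivity
          have hpos : 0 < |zh τ i| / (|G τ i| + η1) := div_pos (abs_pos.mpr hzi) hden
          have h := Ioo_mem_nhdsGT_of_mem
            (show τ ∈ Set.Ico τ (τ + |zh τ i| / (|G τ i| + η1)) from
              ⟨le_refl τ, by linarith⟩)
          filter_upwards [h] with τ' h' _
          have h2 : τ' - τ < |zh τ i| / (|G τ i| + η1) := by linarith [h'.2]
          calc (τ' - τ) * (|G τ i| + η1)
              < (|zh τ i| / (|G τ i| + η1)) * (|G τ i| + η1) :=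
              mul_lt_mul_of_pos_right h2 hden
          _ = |zh τ i| := div_mul_cancel₀ _ (ne_of_gt hden)
      filter_upwards [E1, E2, E3, self_mem_nhdsWithin] with τ' h1 h2 h3 h4
      have hττ' : τ < τ' := h4
      have hh : 0 < τ' - τ := sub_pos.mpr hττ'
      have hcompid : ∀ i, zh τ' i = zh τ i + ∫ σ in τ..τ', G σ i := by
        intro i
        have e3 : zh τ' = zh τ + ∫ σ in τ..τ', G σ := by
          rw [hzh_eq τ' (hτ.1.trans hττ'.le), hzh_eq τ hτ.1,
            ← intervalIntegral.integral_add_adjacent_intervals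
              (hG_ii r τ hr hτ.1) (hG_ii τ τ' hτ0 hττ'.le)]
          abel
        rw [e3]
        show zh τ i + (∫ σ in τ..τ', G σ) i = _
        rw [hGj τ τ' hτ0 hττ'.le i]
      have hJerr : ∀ i, |(∫ σ in τ..τ', G σ i) - (τ' - τ) * G τ i| ≤ (τ' - τ) * η1 := by
        intro i
        have hGi_cont : ContinuousOn (fun σ => G σ i) (Set.Icc τ τ') :=
          (continuous_apply i).comp_continuousOn
            (hGc.mono fun u hu => le_trans hτ0 hu.1)
        have hGci : IntervalIntegrable (fun σ => G σ i) volume τ τ' := by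
          apply ContinuousOn.intervalIntegrable
          rwa [Set.uIcc_of_le hττ'.le]
        have hconst : (τ' - τ) * G τ i = ∫ _ in τ..τ', G τ i := by
          rw [intervalIntegral.integral_const]
          simp [smul_eq_mul]
        rw [hconst, ← intervalIntegral.integral_sub hGci intervalIntegrable_const]
        calc |∫ σ in τ..τ', (G σ i - G τ i)| ≤ ∫ σ in τ..τ', |G σ i - G τ i| :=
            intervalIntegral.abs_integral_le_integral_abs hττ'.le
        _ ≤ ∫ _ in τ..τ', η1 := by
            apply intervalIntegral.integral_mono_on hττ'.le
              ((hGci.sub intervalIntegrable_const).abs) intervalIntegrable_const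
            intro σ hσ
            have hσ0 : σ ∈ Set.Ici (0:ℝ) := le_trans hτ0 hσ.1
            have hdist : dist σ τ < d := by
              rw [Real.dist_eq, abs_of_nonneg (by linarith [hσ.1])]
              linarith [hσ.2]
            have h5 := hball hσ0 hdist
            have h6 := dist_le_pi_dist (G σ) (G τ) i
            rw [Real.dist_eq] at h6
            linarith
        _ = (τ' - τ) * η1 := by
            rw [intervalIntegral.integral_const]
            simp [smul_eq_mul]
      have hcomp_slope : ∀ i, |zh τ' i| ≤ |zh τ i|
          + (τ' - τ) * (A i i * |zh τ i| + |G τ i - A i i * zh τ i| + η1) := by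
        intro i
        rw [hcompid i]
        exact lure_abs_slope (zh τ i) (G τ i) (A i i) _ (τ' - τ) η1 hh hη1.le
          (fun hne => h3 i hne) (hJerr i)
      have hsum2 : Vh τ' - Vh τ ≤ (τ' - τ) * (D τ + sump * η1) := by
        have h6 : Vh τ' ≤ ∑ i, (p i * |zh τ i|
            + (τ' - τ) * (p i * (A i i * |zh τ i| + |G τ i - A i i * zh τ i| + η1))) := by
          apply Finset.sum_le_sum
          intro i _
          have h7 := mul_le_mul_of_nonneg_left (hcomp_slope i) (hp i).le
          nlinarith
        rw [Finset.sum_add_distrib] at h6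
        have h8 : (∑ i, (τ' - τ) * (p i * (A i i * |zh τ i|
            + |G τ i - A i i * zh τ i| + η1)))
            = (τ' - τ) * (D τ + sump * η1) := by
          rw [← Finset.mul_sum]
          congr 1
          show (∑ i, p i * (A i i * |zh τ i| + |G τ i - A i i * zh τ i| + η1))
            = (∑ i, p i * (A i i * |zh τ i| + |G τ i - A i i * zh τ i|)) + (∑ i, p i) * η1
          rw [Finset.sum_mul, ← Finset.sum_add_distrib]
          exact Finset.sum_congr rfl fun i _ => by ring
        rw [h8] at h6
        have h9 : Vh τ = ∑ i, p i * |zh τ i| := rfl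
        linarith
      have hfin : sump * η1 ≤ η := by
        have hfrac : sump / (sump + 1) ≤ 1 := by
          rw [div_le_one (by linarith)]
          linarith
        calc sump * η1 = η * (sump / (sump + 1)) := by rw [hη1_def]; ring
        _ ≤ η * 1 := by nlinarith
        _ = η := mul_one η
      calc Vh τ' - Vh τ ≤ (τ' - τ) * (D τ + sump * η1) := hsum2
      _ ≤ (τ' - τ) * (D τ + η) := by nlinarith
    have hslope : ∀ τ ∈ Set.Ico r t, ∀ c : ℝ, (-ξ * Vh τ + Q r t) < c →
        ∃ᶠ τ' in 𝓝[>] τ, (τ' - τ)⁻¹ * (Vh τ' - Vh τ) < c := by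
      intro τ hτ c hc
      have hDc : D τ < c := lt_of_le_of_lt (hD_le τ ⟨hτ.1, hτ.2.le⟩) hc
      have hηpos : 0 < (c - D τ) / 2 := by linarith
      have hev := hcore τ hτ _ hηpos
      refine ((hev.and self_mem_nhdsWithin).mono ?_).frequently
      rintro τ' ⟨h1, h2⟩
      have hh : 0 < τ' - τ := sub_pos.mpr h2
      have h3 : (τ' - τ)⁻¹ * (Vh τ' - Vh τ) ≤ D τ + (c - D τ) / 2 := by
        rw [inv_mul_le_iff₀ hh]
        calc Vh τ' - Vh τ ≤ (τ' - τ) * (D τ + (c - D τ) / 2) := h1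
        _ = (τ' - τ) * (D τ + (c - D τ) / 2) := rfl
      linarith
    have grn := le_gronwallBound_of_liminf_deriv_right_le (f := Vh)
      (f' := fun τ => -ξ * Vh τ + Q r t) (δ := V r) (K := -ξ) (ε := Q r t)
      hVhc hslope (le_of_eq hVhr) (fun τ _ => le_rfl) t (Set.right_mem_Icc.mpr hrt)
    have hQnn' : 0 ≤ Q r t := hQnn r t hr hrt
    have hgb : gronwallBound (V r) (-ξ) (Q r t) (t - r) ≤
        V r * Real.exp (-ξ * (t - r)) + (1/ξ) * Q r t := by
      rw [gronwallBound_of_K_ne_0 (by intro h; nlinarith : (-ξ) ≠ 0)]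
      have hexp1 : Real.exp (-ξ * (t - r)) ≤ 1 :=
        Real.exp_le_one_iff.mpr (by nlinarith)
      have hexp_nn : (0:ℝ) ≤ Real.exp (-ξ * (t - r)) := (Real.exp_pos _).le
      have heq : Q r t / (-ξ) * (Real.exp (-ξ * (t - r)) - 1)
          = Q r t / ξ * (1 - Real.exp (-ξ * (t - r))) := by
        rw [div_neg]; ring
      have hle : Q r t / ξ * (1 - Real.exp (-ξ * (t - r))) ≤ (1/ξ) * Q r t := by
        have hd : 0 ≤ Q r t / ξ := div_nonneg hQnn' hξ.le
        have : Q r t / ξ * (1 - Real.exp (-ξ * (t - r))) ≤ Q r t / ξ * 1 := by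
          apply mul_le_mul_of_nonneg_left _ hd
          linarith
        calc Q r t / ξ * (1 - Real.exp (-ξ * (t - r))) ≤ Q r t / ξ * 1 := this
        _ = (1/ξ) * Q r t := by ring
      show V r * Real.exp (-ξ * (t - r))
          + Q r t / (-ξ) * (Real.exp (-ξ * (t - r)) - 1)
          ≤ V r * Real.exp (-ξ * (t - r)) + (1/ξ) * Q r t
      rw [heq]
      linarith
    have hVt : V t ≤ Vh t + Q r t := by
      have h1 : ∀ i, |z t i| ≤ |zh t i| + |W t i| := by
        intro i
        have he : z t i = zh t i + W t i := by
          show z t i = (z t - W t) i + W t i; simp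
        rw [he]
        exact abs_add_le _ _
      have h2 : V t ≤ ∑ i, (p i * |zh t i| + p i * |W t i|) := by
        apply Finset.sum_le_sum
        intro i _
        have := mul_le_mul_of_nonneg_left (h1 i) (hp i).le
        nlinarith
      rw [Finset.sum_add_distrib] at h2
      have h3 : (∑ i, p i * |W t i|) ≤ Q r t := by
        calc (∑ i, p i * |W t i|) ≤ ∑ i, p i * Ij i := Finset.sum_le_sum fun i _ =>
            mul_le_mul_of_nonneg_left (hWbound t ⟨hrt, le_refl t⟩ i) (hp i).le
        _ ≤ ∑ i, (Kc i + p i) * Ij i := Finset.sum_le_sum fun i _ =>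
            mul_le_mul_of_nonneg_right (by linarith [hKc_nn i]) (hIj_nn i)
        _ = Q r t := hQval.symm
      have h4 : Vh t = ∑ i, p i * |zh t i| := rfl
      linarith
    calc V t ≤ Vh t + Q r t := hVt
    _ ≤ (V r * Real.exp (-ξ * (t - r)) + (1/ξ) * Q r t) + Q r t := by
        linarith [le_trans grn hgb]
    _ = V r * Real.exp (-ξ * (t - r)) + (1 / ξ + 1) * Q r t := by ring
  -- tail smallness of Q over windows of fixed width
  have hQtail : ∀ T η : ℝ, 0 < T → 0 < η →
      ∃ R : ℝ, 0 ≤ R ∧ ∀ r, R ≤ r → Q r (r + T) ≤ η := by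
    intro T η hT hη
    set cq := ∑ j, (Kc j + p j) * (∑ k, B₂ j k) with hcq_def
    have hcq_nn : 0 ≤ cq := Finset.sum_nonneg fun j _ => mul_nonneg
      (add_nonneg (hKc_nn j) (hp j).le) (Finset.sum_nonneg fun k _ => hB₂ j k)
    have hqp : ∀ σ, q σ ≤ cq * ‖δw σ‖ := by
      intro σ
      have hbwj : ∀ j, |bw σ j| ≤ (∑ k, B₂ j k) * ‖δw σ‖ := by
        intro j
        have hb0 : |bw σ j| = |∑ k, B₂ j k * δw σ k| := by
          simp [hbw_def, Matrix.mulVec, dotProduct]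
        calc |bw σ j| = |∑ k, B₂ j k * δw σ k| := hb0
        _ ≤ ∑ k, |B₂ j k * δw σ k| := Finset.abs_sum_le_sum_abs _ _
        _ ≤ ∑ k, B₂ j k * ‖δw σ‖ := by
            apply Finset.sum_le_sum
            intro k _
            rw [abs_mul, abs_of_nonneg (hB₂ j k)]
            apply mul_le_mul_of_nonneg_left _ (hB₂ j k)
            calc |δw σ k| = ‖δw σ k‖ := (Real.norm_eq_abs _).symm
            _ ≤ ‖δw σ‖ := norm_le_pi_norm (δw σ) k
        _ = (∑ k, B₂ j k) * ‖δw σ‖ := by rw [Finset.sum_mul]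
      have hq1 : q σ ≤ ∑ j, (Kc j + p j) * ((∑ k, B₂ j k) * ‖δw σ‖) :=
        Finset.sum_le_sum fun j _ =>
          mul_le_mul_of_nonneg_left (hbwj j) (add_nonneg (hKc_nn j) (hp j).le)
      calc q σ ≤ ∑ j, (Kc j + p j) * ((∑ k, B₂ j k) * ‖δw σ‖) := hq1
      _ = cq * ‖δw σ‖ := by
          rw [hcq_def, Finset.sum_mul]
          exact Finset.sum_congr rfl fun j _ => by ring
    set g : ℝ → ℝ := fun σ => ‖δw σ‖ ^ s with hg_def
    have hg_nn : ∀ σ, 0 ≤ g σ := fun σ => Real.rpow_nonneg (norm_nonneg _) s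
    have hg_io : IntegrableOn g (Set.Ioi 0) volume :=
      hLs.mono_set Set.Ioi_subset_Ici_self
    have hg_int : ∀ a b : ℝ, 0 ≤ a → a ≤ b → IntervalIntegrable g volume a b := by
      intro a b ha0 hab
      have h1 : IntegrableOn g (Set.Icc a b) volume :=
        hLs.mono_set (fun u hu => le_trans ha0 hu.1)
      exact ((Set.uIcc_of_le hab).symm ▸ h1).intervalIntegrable
    set θ := min 1 (η / (2 * cq * T + 1)) with hθ_def
    have hden1 : (0:ℝ) < 2 * cq * T + 1 := by nlinarith
    have hθpos : 0 < θ := lt_min one_pos (div_pos hη hden1)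
    have hθ1 : θ ≤ 1 := min_le_left _ _
    have hθle : θ ≤ η / (2 * cq * T + 1) := min_le_right _ _
    have hrp_nn : 0 ≤ θ ^ (1 - s) := Real.rpow_nonneg hθpos.le _
    have hq2 : ∀ σ, q σ ≤ cq * θ + (cq * θ ^ (1 - s)) * g σ := by
      intro σ
      have h1 := lure_theta_bound (‖δw σ‖) θ s (norm_nonneg _) hθpos hθ1 hs
      have h2 := hqp σ
      have h3 : cq * ‖δw σ‖ ≤ cq * (θ + θ ^ (1 - s) * g σ) :=
        mul_le_mul_of_nonneg_left h1 hcq_nn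
      nlinarith
    have hΨ := MeasureTheory.intervalIntegral_tendsto_integral_Ioi 0 hg_io
      (tendsto_id (α := ℝ))
    have hΨT : Tendsto (fun r : ℝ => ∫ σ in (0:ℝ)..(r + T), g σ) atTop
        (𝓝 (∫ σ in Set.Ioi 0, g σ)) :=
      hΨ.comp (tendsto_atTop_add_const_right atTop T tendsto_id)
    have hdiff : Tendsto
        (fun r : ℝ => (∫ σ in (0:ℝ)..(r + T), g σ) - ∫ σ in (0:ℝ)..r, g σ)
        atTop (𝓝 0) := by
      have h5 := hΨT.sub hΨ
      simpa using h5
    set η2 := η / (2 * (cq * θ ^ (1 - s) + 1)) with hη2_def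
    have hden2 : (0:ℝ) < 2 * (cq * θ ^ (1 - s) + 1) := by nlinarith
    have hη2pos : 0 < η2 := div_pos hη hden2
    have hev : ∀ᶠ r in atTop,
        (∫ σ in (0:ℝ)..(r + T), g σ) - (∫ σ in (0:ℝ)..r, g σ) < η2 :=
      hdiff.eventually_lt_const hη2pos
    obtain ⟨R', hR'⟩ := eventually_atTop.mp hev
    refine ⟨max R' 0, le_max_right _ _, fun r hrR => ?_⟩
    have hr0 : 0 ≤ r := le_trans (le_max_right R' 0) hrR
    have hrT : r ≤ r + T := by linarith
    have hsplit : (∫ σ in r..(r + T), g σ)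
        = (∫ σ in (0:ℝ)..(r + T), g σ) - ∫ σ in (0:ℝ)..r, g σ := by
      rw [← intervalIntegral.integral_add_adjacent_intervals (hg_int 0 r le_rfl hr0)
        (hg_int r (r + T) hr0 hrT)]
      ring
    have htail_nn : 0 ≤ ∫ σ in r..(r + T), g σ :=
      intervalIntegral.integral_nonneg hrT fun σ _ => hg_nn σ
    have htail_lt : (∫ σ in r..(r + T), g σ) ≤ η2 := by
      rw [hsplit]
      exact (hR' r (le_trans (le_max_left R' 0) hrR)).le
    have hQb : Q r (r + T) ≤ cq * θ * T + (cq * θ ^ (1 - s)) * ∫ σ in r..(r + T), g σ := by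
      have hmono := intervalIntegral.integral_mono_on hrT (hq_int r (r + T) hr0 hrT)
        (intervalIntegrable_const.add ((hg_int r (r + T) hr0 hrT).const_mul _))
        (fun σ _ => hq2 σ)
      have hIeq : (∫ σ in r..(r + T), (cq * θ + (cq * θ ^ (1 - s)) * g σ))
          = cq * θ * T + (cq * θ ^ (1 - s)) * ∫ σ in r..(r + T), g σ := by
        rw [intervalIntegral.integral_add intervalIntegrable_const
          ((hg_int r (r + T) hr0 hrT).const_mul _), intervalIntegral.integral_const,
          intervalIntegral.integral_const_mul]
        simp only [smul_eq_mul]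
        ring
      calc Q r (r + T) = ∫ σ in r..(r + T), q σ := rfl
      _ ≤ ∫ σ in r..(r + T), (cq * θ + (cq * θ ^ (1 - s)) * g σ) := hmono
      _ = _ := hIeq
    have hb1 : cq * θ * T ≤ η / 2 := by
      have h6 : θ * (2 * cq * T + 1) ≤ η := by
        rw [← le_div_iff₀ hden1]
        exact hθle
      nlinarith
    have hb2 : (cq * θ ^ (1 - s)) * (∫ σ in r..(r + T), g σ) ≤ η / 2 := by
      have hc' : 0 ≤ cq * θ ^ (1 - s) := mul_nonneg hcq_nn hrp_nn
      have h7 : η2 * (2 * (cq * θ ^ (1 - s) + 1)) = η := by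
        rw [hη2_def]
        field_simp
      nlinarith
    linarith
  -- V tends to zero
  have hVto0 : Tendsto V atTop (𝓝 0) := by
    set T0 := max 1 (Real.log 4 / ξ) with hT0_def
    have hT0_pos : (0:ℝ) < T0 := lt_of_lt_of_le one_pos (le_max_left _ _)
    have hquarter : Real.exp (-ξ * T0) ≤ 1 / 4 := by
      have h4 : Real.log 4 / ξ ≤ T0 := le_max_right _ _
      have h5 : Real.log 4 ≤ ξ * T0 := by
        rw [div_le_iff₀ hξ] at h4
        linarith
      have h6 : Real.exp (-ξ * T0) ≤ Real.exp (-(Real.log 4)) :=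
        Real.exp_le_exp.mpr (by linarith)
      rw [Real.exp_neg, Real.exp_log (by norm_num : (0:ℝ) < 4)] at h6
      linarith
    set Cξ := 1 / ξ + 1 with hCξ_def
    have hCξ_pos : 0 < Cξ := by positivity
    obtain ⟨R0, hR0nn, hR0⟩ := hQtail T0 (1 / Cξ) hT0_pos (by positivity)
    have hgrid : ∀ k : ℕ, V (R0 + k * T0) ≤ V R0 + 4 / 3 := by
      intro k
      induction k with
      | zero => simp; norm_num
      | succ k ih =>
        have hrk : (0:ℝ) ≤ R0 + k * T0 := by positivity
        have hrk1 : R0 + (k:ℝ) * T0 ≤ R0 + ((k:ℕ) + 1 : ℕ) * T0 := by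
          push_cast
          nlinarith [hT0_pos.le]
        have hKEY := KEY (R0 + k * T0) (R0 + ((k:ℕ) + 1 : ℕ) * T0) hrk hrk1
        have hTd : (R0 + (((k:ℕ) + 1 : ℕ) : ℝ) * T0) - (R0 + (k:ℝ) * T0) = T0 := by
          push_cast
          ring
        rw [hTd] at hKEY
        have he : R0 + (((k:ℕ) + 1 : ℕ) : ℝ) * T0 = (R0 + (k:ℝ) * T0) + T0 := by
          push_cast
          ring
        have hQk : Q (R0 + k * T0) (R0 + ((k:ℕ) + 1 : ℕ) * T0) ≤ 1 / Cξ := by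
          rw [he]
          exact hR0 (R0 + k * T0) (by nlinarith [hT0_pos.le])
        have hexp_nn := (Real.exp_pos (-ξ * T0)).le
        have hQ_nn := hQnn (R0 + k * T0) (R0 + ((k:ℕ) + 1 : ℕ) * T0) hrk hrk1
        have hm1 : V (R0 + k * T0) * Real.exp (-ξ * T0) ≤ (V R0 + 4 / 3) * (1 / 4) :=
          mul_le_mul ih hquarter hexp_nn (by linarith [hVnn R0])
        have hm2 : Cξ * Q (R0 + k * T0) (R0 + ((k:ℕ) + 1 : ℕ) * T0) ≤ 1 := by
          calc Cξ * Q (R0 + k * T0) (R0 + ((k:ℕ) + 1 : ℕ) * T0) ≤ Cξ * (1 / Cξ) :=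
              mul_le_mul_of_nonneg_left hQk hCξ_pos.le
          _ = 1 := by field_simp
        nlinarith [hVnn R0]
    have hMall : ∀ u : ℝ, R0 ≤ u → V u ≤ V R0 + 4 / 3 + 1 := by
      intro u hu
      set k := ⌊(u - R0) / T0⌋₊ with hk_def
      have hd_nn : 0 ≤ (u - R0) / T0 := div_nonneg (by linarith) hT0_pos.le
      have hk1 : (k:ℝ) ≤ (u - R0) / T0 := Nat.floor_le hd_nn
      have hk2 : (u - R0) / T0 < k + 1 := Nat.lt_floor_add_one _
      have hk1' : (k:ℝ) * T0 ≤ u - R0 := (le_div_iff₀ hT0_pos).mp hk1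
      have hk2' : u - R0 < ((k:ℝ) + 1) * T0 := (div_lt_iff₀ hT0_pos).mp hk2
      have hrk : R0 + (k:ℝ) * T0 ≤ u := by linarith
      have hrk0 : (0:ℝ) ≤ R0 + (k:ℝ) * T0 := by positivity
      have htup : u ≤ (R0 + (k:ℝ) * T0) + T0 := by nlinarith
      have hKEY := KEY (R0 + k * T0) u hrk0 hrk
      have hexp1 : Real.exp (-ξ * (u - (R0 + (k:ℝ) * T0))) ≤ 1 :=
        Real.exp_le_one_iff.mpr (by nlinarith)
      have hQle : Q (R0 + (k:ℝ) * T0) u ≤ 1 / Cξ := by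
        calc Q (R0 + (k:ℝ) * T0) u ≤ Q (R0 + (k:ℝ) * T0) ((R0 + (k:ℝ) * T0) + T0) :=
            hQmono _ _ _ hrk0 hrk (by linarith)
        _ ≤ 1 / Cξ := hR0 _ (by nlinarith [hT0_pos.le])
      have hm2 : Cξ * Q (R0 + (k:ℝ) * T0) u ≤ 1 := by
        calc Cξ * Q (R0 + (k:ℝ) * T0) u ≤ Cξ * (1 / Cξ) :=
            mul_le_mul_of_nonneg_left hQle hCξ_pos.le
        _ = 1 := by field_simp
      have hm1 : V (R0 + (k:ℝ) * T0) * Real.exp (-ξ * (u - (R0 + (k:ℝ) * T0)))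
          ≤ V R0 + 4 / 3 := by
        calc V (R0 + (k:ℝ) * T0) * Real.exp (-ξ * (u - (R0 + (k:ℝ) * T0)))
            ≤ (V R0 + 4 / 3) * 1 :=
            mul_le_mul (hgrid k) hexp1 (Real.exp_pos _).le (by linarith [hVnn R0])
        _ = V R0 + 4 / 3 := mul_one _
      linarith
    set M := V R0 + 4 / 3 + 1 with hM_def
    have hM_pos : 0 < M := by
      have := hVnn R0
      rw [hM_def]
      linarith
    have hHalf : ∀ c : ℝ, 0 < c → (∀ᶠ u in atTop, V u ≤ c) →
        (∀ᶠ u in atTop, V u ≤ c / 2) := by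
      intro c hc hev
      obtain ⟨R1, hR1⟩ := eventually_atTop.mp hev
      obtain ⟨R2, hR2nn, hR2⟩ := hQtail T0 (c / (4 * Cξ)) hT0_pos (by positivity)
      refine eventually_atTop.mpr ⟨max (max R1 R2) 0 + T0, fun u hu => ?_⟩
      have hmax0 : (0:ℝ) ≤ max (max R1 R2) 0 := le_max_right _ _
      have hu0 : 0 ≤ u - T0 := by linarith
      have hKEY := KEY (u - T0) u hu0 (by linarith)
      have hTd : u - (u - T0) = T0 := by ring
      rw [hTd] at hKEY
      have hVu : V (u - T0) ≤ c := by
        apply hR1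
        have h1 := le_max_left R1 R2
        have h2 := le_max_left (max R1 R2) (0:ℝ)
        linarith
      have hQu : Q (u - T0) u ≤ c / (4 * Cξ) := by
        have h7 := hR2 (u - T0) (by
          have h1 := le_max_right R1 R2
          have h2 := le_max_left (max R1 R2) (0:ℝ)
          linarith)
        have h8 : (u - T0) + T0 = u := by ring
        rwa [h8] at h7
      have hm1 : V (u - T0) * Real.exp (-ξ * T0) ≤ c * (1 / 4) :=
        mul_le_mul hVu hquarter (Real.exp_pos _).le hc.le
      have hm2 : Cξ * Q (u - T0) u ≤ c / 4 := by
        calc Cξ * Q (u - T0) u ≤ Cξ * (c / (4 * Cξ)) :=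
            mul_le_mul_of_nonneg_left hQu hCξ_pos.le
        _ = c / 4 := by
            field_simp
      calc V u ≤ V (u - T0) * Real.exp (-ξ * T0) + Cξ * Q (u - T0) u := hKEY
      _ ≤ c * (1 / 4) + c / 4 := add_le_add hm1 hm2
      _ = c / 2 := by ring
    have hpow : ∀ k : ℕ, ∀ᶠ u in atTop, V u ≤ M / 2 ^ k := by
      intro k
      induction k with
      | zero =>
        simp only [pow_zero, div_one]
        exact eventually_atTop.mpr ⟨R0, fun u hu => hMall u hu⟩
      | succ k ih =>
        have h := hHalf (M / 2 ^ k) (by positivity) ih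
        have he : M / 2 ^ k / 2 = M / 2 ^ (k + 1) := by
          rw [pow_succ]
          ring
        rwa [he] at h
    rw [Metric.tendsto_atTop]
    intro ε hε
    obtain ⟨k, hk⟩ : ∃ k : ℕ, M / 2 ^ k < ε := by
      obtain ⟨k, hk⟩ := exists_pow_lt_of_lt_one (div_pos hε hM_pos)
        (by norm_num : (1:ℝ) / 2 < 1)
      refine ⟨k, ?_⟩
      have h2 : ((1:ℝ) / 2) ^ k = 1 / 2 ^ k := by
        rw [div_pow]
        norm_num
      rw [h2] at hk
      have h3 : M * (1 / 2 ^ k) < M * (ε / M) := by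
        apply mul_lt_mul_of_pos_left hk hM_pos
      have h4 : M * (ε / M) = ε := by field_simp
      calc M / 2 ^ k = M * (1 / 2 ^ k) := by ring
      _ < M * (ε / M) := h3
      _ = ε := h4
    obtain ⟨N, hN⟩ := eventually_atTop.mp (hpow k)
    refine ⟨N, fun u hu => ?_⟩
    rw [Real.dist_eq, sub_zero, abs_of_nonneg (hVnn u)]
    exact lt_of_le_of_lt (hN u hu) hk
  -- conclude
  rw [tendsto_pi_nhds]
  intro i
  have hbound : ∀ t, |z t i| ≤ (p i)⁻¹ * V t := by
    intro t
    rw [inv_mul_eq_div, le_div_iff₀ (hp i)]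
    have hm : p i * |z t i| ≤ V t := by
      apply Finset.single_le_sum (f := fun j => p j * |z t j|)
        (fun j _ => mul_nonneg (hp j).le (abs_nonneg _)) (Finset.mem_univ i)
    linarith
  have hlim : Tendsto (fun t => (p i)⁻¹ * V t) atTop (𝓝 0) := by
    simpa using hVto0.const_mul (p i)⁻¹
  have hfin : Tendsto (fun t => z t i) atTop (𝓝 0) :=
    squeeze_zero_norm (f := fun t => z t i)
      (fun t => by simpa [Real.norm_eq_abs] using hbound t) hlim
  simpa using hfin
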